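/- Let f : ℝ^d → ℝ be twice continuously differentiable, L-smooth, and satisfy the PL inequality with constant μ > 0, and let (x_t, v_t)_{t ≥ 0} solve the heavy ball ODE with friction parameter α > 0 and arbitrary initial condition (x_0, v_0) ∈ ℝ^d × ℝ^d. Then lim_{t→∞} v_t = 0 and there exists x_∞ ∈ M (depending on x_0, v_0) such that lim_{t→∞} x_t = x_∞. -/

import Mathlib

set_option maxHeartbeats 1000000

open Filter Topology

local notation "⟪" a ", " b "⟫" => @inner ℝ _ _ a b

private lemma hb_young (e c p q : ℝ) (he : 0 < e) (hce : c^2 ≤ e) :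
    c*(q*p) ≤ (1/2)*p^2 + (e/2)*q^2 := by
  have k1 : 2*e*(c*(q*p)) ≤ c^2*p^2 + e^2*q^2 := by nlinarith [sq_nonneg (c*p - e*q)]
  have k2 : c^2*p^2 ≤ e*p^2 := mul_le_mul_of_nonneg_right hce (sq_nonneg _)
  nlinarith [he]

private lemma hb_bounds (e c a h p q iv : ℝ) (he : 0 < e) (hc0 : 0 < c) (hce : c^2 ≤ e)
    (hiv : |iv| ≤ q*p) :
    a*h + (1/2)*p^2 + (e/2)*q^2 ≤ a*h + p^2 + c*iv + e*q^2 ∧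
      a*h + p^2 + c*iv + e*q^2 ≤ a*h + (3/2)*p^2 + (3*e/2)*q^2 := by
  have hy := hb_young e c p q he hce
  have h1 : c*iv ≤ c*(q*p) := mul_le_mul_of_nonneg_left (le_of_abs_le hiv) hc0.le
  have h2 : c*(-(q*p)) ≤ c*iv := mul_le_mul_of_nonneg_left (abs_le.1 hiv).1 hc0.le
  constructor <;> nlinarith

private lemma hb_key (α L μ e c a lam p q h Dv Dg gD iv : ℝ)
    (hα : 0 < α) (hL : 0 < L) (he : 0 < e)
    (hc : c = 2*e*L) (ha : a = 2 + c*α) (hce : c^2 ≤ e) (hcel : (c+e)*L ≤ α)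
    (hlam : 0 < lam) (hlam1 : lam ≤ 2*α/3) (hlam2 : lam ≤ L/3) (hlam3 : lam ≤ c*μ/(2*a))
    (hh : 0 ≤ h) (hPL : 2*μ*h ≤ q^2)
    (hDv : Dv ≤ L*p^2) (hDg : Dg ≤ L*p*q) (hgD : gD ≤ L*p*q) (hiv : |iv| ≤ q*p) :
    -(2*α)*p^2 - c*q^2 + c*Dv + e*(gD + Dg) ≤ -lam*(a*h + p^2 + c*iv + e*q^2) := by
  subst hc
  set c : ℝ := 2*e*L with hc
  have hc0 : 0 < c := by rw [hc]; positivity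
  have ha0 : 0 < a := by rw [ha]; positivity
  have s1 : c*Dv ≤ c*(L*p^2) := mul_le_mul_of_nonneg_left hDv hc0.le
  have s2 : e*(gD + Dg) ≤ e*(2*(L*p*q)) := mul_le_mul_of_nonneg_left (by linarith) he.le
  have s3 : 0 ≤ e*L*(p-q)^2 := by positivity
  have s4 : (c+e)*L*p^2 ≤ α*p^2 := mul_le_mul_of_nonneg_right hcel (sq_nonneg _)
  have lhs : -(2*α)*p^2 - c*q^2 + c*Dv + e*(gD + Dg) ≤ -α*p^2 - (c/2)*q^2 := by
    rw [hc] at *; linarith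
  have hy : c*(q*p) ≤ (1/2)*p^2 + (e/2)*q^2 := hb_young e c p q he hce
  have t0 : c*iv ≤ c*(q*p) := mul_le_mul_of_nonneg_left (le_of_abs_le hiv) hc0.le
  have t1 : lam*(a*h + p^2 + c*iv + e*q^2) ≤ lam*(a*h + (3/2)*p^2 + (3*e/2)*q^2) := by
    apply mul_le_mul_of_nonneg_left _ hlam.le
    linarith
  have t2 : lam*a ≤ c*μ/2 := by
    rw [le_div_iff₀ (by positivity)] at hlam3
    linarith
  have t3 : lam*a*h ≤ (c*μ/2)*h := mul_le_mul_of_nonneg_right t2 hh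
  have t4 : (c*μ/2)*h ≤ (c/4)*q^2 := by
    have := mul_le_mul_of_nonneg_left hPL (show (0:ℝ) ≤ c/4 by positivity)
    linarith
  have t5 : lam*((3:ℝ)/2)*p^2 ≤ α*p^2 := mul_le_mul_of_nonneg_right (by linarith) (sq_nonneg _)
  have t6 : lam*(3*e/2)*q^2 ≤ (c/4)*q^2 := by
    have h16 : lam*(3*e/2) ≤ (L/3)*(3*e/2) := mul_le_mul_of_nonneg_right hlam2 (by positivity)
    have h17 : (L/3)*(3*e/2) = c/4 := by rw [hc]; ring
    exact mul_le_mul_of_nonneg_right (by linarith) (sq_nonneg _)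
  linarith [t1, t3, t4, t5, t6, lhs]

theorem heavy_ball_ode_converges
    (d : ℕ) (f : EuclideanSpace ℝ (Fin d) → ℝ) (μ L : ℝ) (hμ : 0 < μ) (hL : 0 < L)
    (hC2 : ContDiff ℝ 2 f)
    (xstar : EuclideanSpace ℝ (Fin d)) (hstar : ∀ y, f xstar ≤ f y)
    (hPL : ∀ x, 2 * μ * (f x - f xstar) ≤ ‖gradient f x‖ ^ 2)
    (hLip : ∀ x y, ‖gradient f x - gradient f y‖ ≤ L * ‖x - y‖)
    (α : ℝ) (hα : 0 < α)
    (x v : ℝ → EuclideanSpace ℝ (Fin d))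
    (hx : ∀ t : ℝ, HasDerivAt x (v t) t)
    (hv : ∀ t : ℝ, HasDerivAt v (-(α • v t) - gradient f (x t)) t) :
    Tendsto v atTop (𝓝 0) ∧
      ∃ xinf : EuclideanSpace ℝ (Fin d), (∀ y, f xinf ≤ f y) ∧ Tendsto x atTop (𝓝 xinf) := by
  have hL0 : (0:ℝ) ≤ L := hL.le
  obtain ⟨g, hg_def⟩ : ∃ g : ℝ → EuclideanSpace ℝ (Fin d), g = fun t => gradient f (x t) :=
    ⟨_, rfl⟩
  have hdf : Differentiable ℝ f := hC2.differentiable two_ne_zero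
  -- derivative of f ∘ x
  have hfx : ∀ t, HasDerivAt (fun s => f (x s)) ⟪g t, v t⟫ t := by
    intro t
    have h1 := ((hdf (x t)).hasGradientAt.hasFDerivAt).comp_hasDerivAt t (hx t)
    rw [hg_def]
    simpa [InnerProductSpace.toDual_apply_apply, Function.comp_def] using h1
  -- derivative of g
  have hfd1 : ContDiff ℝ 1 (fderiv ℝ f) := hC2.fderiv_right (by norm_num)
  obtain ⟨D, hD_def⟩ : ∃ D : ℝ → EuclideanSpace ℝ (Fin d),
      D = fun t => (InnerProductSpace.toDual ℝ (EuclideanSpace ℝ (Fin d))).symm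
        ((fderiv ℝ (fderiv ℝ f) (x t)) (v t)) := ⟨_, rfl⟩
  have hg' : ∀ t, HasDerivAt g (D t) t := by
    intro t
    have h1 : HasDerivAt (fun s => fderiv ℝ f (x s))
        ((fderiv ℝ (fderiv ℝ f) (x t)) (v t)) t :=
      ((hfd1.differentiable one_ne_zero) (x t)).hasFDerivAt.comp_hasDerivAt t (hx t)
    have h2 := ((InnerProductSpace.toDual ℝ
        (EuclideanSpace ℝ (Fin d))).symm.toContinuousLinearEquiv.toContinuousLinearMap
        ).hasFDerivAt.comp_hasDerivAt t h1
    rw [hg_def, hD_def]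
    simpa [gradient, Function.comp_def] using h2
  -- Lipschitz bound on the second derivative
  have hfeq : ∀ y, fderiv ℝ f y = InnerProductSpace.toDual ℝ _ (gradient f y) := by
    intro y
    rw [gradient, LinearIsometryEquiv.apply_symm_apply]
  have hlipf : LipschitzWith (Real.toNNReal L) (fderiv ℝ f) := by
    apply LipschitzWith.of_dist_le_mul
    intro p q
    rw [hfeq p, hfeq q, (InnerProductSpace.toDual ℝ _).dist_map]
    rw [dist_eq_norm, dist_eq_norm, Real.coe_toNNReal L hL0]
    exact hLip p q
  have hDb : ∀ t, ‖D t‖ ≤ L * ‖v t‖ := by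
    intro t
    have h0 : ‖D t‖ = ‖(fderiv ℝ (fderiv ℝ f) (x t)) (v t)‖ := by
      rw [hD_def]; exact LinearIsometryEquiv.norm_map _ _
    have h1 : ‖fderiv ℝ (fderiv ℝ f) (x t)‖ ≤ L := by
      have := norm_fderiv_le_of_lipschitz ℝ hlipf (x₀ := x t)
      simpa [Real.coe_toNNReal L hL0] using this
    calc ‖D t‖ = ‖(fderiv ℝ (fderiv ℝ f) (x t)) (v t)‖ := h0
      _ ≤ ‖fderiv ℝ (fderiv ℝ f) (x t)‖ * ‖v t‖ := ContinuousLinearMap.le_opNorm _ _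
      _ ≤ L * ‖v t‖ := mul_le_mul_of_nonneg_right h1 (norm_nonneg _)
  -- constants
  obtain ⟨e, he, he1, he2⟩ : ∃ e : ℝ, 0 < e ∧ e ≤ 1/(4*L^2) ∧ e ≤ α/(2*L^2+L) :=
    ⟨min (1/(4*L^2)) (α/(2*L^2+L)), lt_min (by positivity) (by positivity),
      min_le_left _ _, min_le_right _ _⟩
  obtain ⟨c, hc_def⟩ : ∃ c : ℝ, c = 2*e*L := ⟨_, rfl⟩
  have hc : 0 < c := by rw [hc_def]; positivity
  obtain ⟨a, ha_def⟩ : ∃ a : ℝ, a = 2 + c*α := ⟨_, rfl⟩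
  have ha : 0 < a := by rw [ha_def]; positivity
  have hce : c^2 ≤ e := by
    have h2 : e * (4*L^2) ≤ 1 := by
      rw [le_div_iff₀ (by positivity)] at he1; linarith
    nlinarith [hc_def]
  have hcel : (c+e)*L ≤ α := by
    have h3 : e * (2*L^2+L) ≤ α := by
      rw [le_div_iff₀ (by positivity)] at he2; linarith
    nlinarith [hc_def]
  obtain ⟨lam, hlam, hlam1, hlam2, hlam3⟩ :
      ∃ lam : ℝ, 0 < lam ∧ lam ≤ 2*α/3 ∧ lam ≤ L/3 ∧ lam ≤ c*μ/(2*a) :=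
    ⟨min (2*α/3) (min (L/3) (c*μ/(2*a))),
      lt_min (by positivity) (lt_min (by positivity) (by positivity)),
      min_le_left _ _, le_trans (min_le_right _ _) (min_le_left _ _),
      le_trans (min_le_right _ _) (min_le_right _ _)⟩
  -- the Lyapunov function
  obtain ⟨V, hV_def⟩ : ∃ V : ℝ → ℝ, V = fun t =>
      a*(f (x t) - f xstar) + ⟪v t, v t⟫ + c*⟪g t, v t⟫ + e*⟪g t, g t⟫ := ⟨_, rfl⟩
  obtain ⟨V', hV'_def⟩ : ∃ V' : ℝ → ℝ, V' = fun t =>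
      a*⟪g t, v t⟫ + (⟪v t, -(α • v t) - g t⟫ + ⟪-(α • v t) - g t, v t⟫)
        + c*(⟪g t, -(α • v t) - g t⟫ + ⟪D t, v t⟫) + e*(⟪g t, D t⟫ + ⟪D t, g t⟫) := ⟨_, rfl⟩
  have hv' : ∀ t, HasDerivAt v (-(α • v t) - g t) t := by
    intro t
    simp only [hg_def]
    exact hv t
  have hVd : ∀ t, HasDerivAt V (V' t) t := by
    intro t
    rw [hV_def, hV'_def]
    exact (((((hfx t).sub_const (f xstar)).const_mul a).add
        ((hv' t).inner ℝ (hv' t))).add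
        (((hg' t).inner ℝ (hv' t)).const_mul c)).add
          (((hg' t).inner ℝ (hg' t)).const_mul e)
  -- scalar facts
  have hnn : ∀ t, 0 ≤ f (x t) - f xstar := fun t => sub_nonneg.2 (hstar (x t))
  have hVeq : ∀ t, V t = a*(f (x t) - f xstar) + ‖v t‖^2 + c*⟪g t, v t⟫ + e*‖g t‖^2 := by
    intro t
    rw [hV_def]
    simp only [real_inner_self_eq_norm_sq]
  have hbnds := fun t => hb_bounds e c a (f (x t) - f xstar) ‖v t‖ ‖g t‖ ⟪g t, v t⟫
    he hc hce (abs_real_inner_le_norm _ _)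
  have hVlow : ∀ t, a*(f (x t) - f xstar) + (1/2)*‖v t‖^2 + (e/2)*‖g t‖^2 ≤ V t := by
    intro t
    rw [hVeq t]
    exact (hbnds t).1
  have hVup : ∀ t, V t ≤ a*(f (x t) - f xstar) + (3/2)*‖v t‖^2 + (3*e/2)*‖g t‖^2 := by
    intro t
    rw [hVeq t]
    exact (hbnds t).2
  have hVnonneg : ∀ t, 0 ≤ V t := by
    intro t
    have h1 := mul_nonneg ha.le (hnn t)
    have h2 : 0 ≤ (1/2)*‖v t‖^2 := by positivity
    have h3 : 0 ≤ (e/2)*‖g t‖^2 := by positivity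
    linarith [hVlow t]
  -- the key differential inequality
  have hkey : ∀ t, V' t ≤ -lam * V t := by
    intro t
    have hDv : ⟪D t, v t⟫ ≤ L * ‖v t‖^2 := by
      calc ⟪D t, v t⟫ ≤ ‖D t‖ * ‖v t‖ := real_inner_le_norm _ _
        _ ≤ (L * ‖v t‖) * ‖v t‖ := mul_le_mul_of_nonneg_right (hDb t) (norm_nonneg _)
        _ = L * ‖v t‖^2 := by ring
    have hDg : ⟪D t, g t⟫ ≤ L * ‖v t‖ * ‖g t‖ := by
      calc ⟪D t, g t⟫ ≤ ‖D t‖ * ‖g t‖ := real_inner_le_norm _ _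
        _ ≤ (L * ‖v t‖) * ‖g t‖ := mul_le_mul_of_nonneg_right (hDb t) (norm_nonneg _)
        _ = L * ‖v t‖ * ‖g t‖ := by ring
    have hgD : ⟪g t, D t⟫ ≤ L * ‖v t‖ * ‖g t‖ := by rw [real_inner_comm]; exact hDg
    have hV'eq : V' t = -(2*α)*‖v t‖^2 - c*‖g t‖^2 + c*⟪D t, v t⟫
        + e*(⟪g t, D t⟫ + ⟪D t, g t⟫) := by
      rw [hV'_def]
      simp only [inner_sub_right, inner_sub_left, inner_neg_right, inner_neg_left,
        real_inner_smul_left, real_inner_smul_right, real_inner_self_eq_norm_sq]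
      rw [real_inner_comm (v t) (g t), ha_def]
      ring
    have hq : 2*μ*(f (x t) - f xstar) ≤ ‖g t‖^2 := by rw [hg_def]; exact hPL (x t)
    rw [hV'eq, hVeq t]
    exact hb_key α L μ e c a lam ‖v t‖ ‖g t‖ (f (x t) - f xstar) ⟪D t, v t⟫ ⟪D t, g t⟫
      ⟪g t, D t⟫ ⟪g t, v t⟫ hα hL he hc_def ha_def hce hcel hlam hlam1 hlam2 hlam3
      (hnn t) hq hDv hDg hgD (abs_real_inner_le_norm _ _)
  -- Gronwall via antitonicity of exp(lam t) * V t
  have hW : ∀ t, HasDerivAt (fun s => Real.exp (lam*s) * V s)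
      (Real.exp (lam*t)*lam * V t + Real.exp (lam*t) * V' t) t := by
    intro t
    have h2 : HasDerivAt (fun s : ℝ => lam*s) lam t := by
      simpa using (hasDerivAt_id t).const_mul lam
    exact ((Real.hasDerivAt_exp _).comp t h2).mul (hVd t)
  have hanti : Antitone (fun s => Real.exp (lam*s) * V s) := by
    apply antitone_of_deriv_nonpos
    · exact fun s => ((hW s).differentiableAt : _)
    · intro t
      rw [(hW t).deriv]
      have h1 := hkey t
      have h2 := (Real.exp_pos (lam*t)).le
      have h3 := mul_le_mul_of_nonneg_left h1 h2
      have h4 : Real.exp (lam*t) * (-lam * V t) = -(Real.exp (lam*t)*lam * V t) := by ring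
      rw [h4] at h3
      linarith
  have hVdecay : ∀ s t, s ≤ t → V t ≤ Real.exp (-(lam*(t-s))) * V s := by
    intro s t hst
    have h1 : Real.exp (lam*t) * V t ≤ Real.exp (lam*s) * V s := hanti hst
    have h2 : (0:ℝ) < Real.exp (-(lam*t)) := Real.exp_pos _
    calc V t = Real.exp (-(lam*t)) * (Real.exp (lam*t) * V t) := by
          rw [← mul_assoc, ← Real.exp_add]; simp
      _ ≤ Real.exp (-(lam*t)) * (Real.exp (lam*s) * V s) :=
          mul_le_mul_of_nonneg_left h1 h2.le
      _ = Real.exp (-(lam*(t-s))) * V s := by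
          rw [← mul_assoc, ← Real.exp_add]; ring_nf
  -- exponential decay of V along atTop
  have hexp0 : Tendsto (fun t : ℝ => Real.exp (-(lam*t))) atTop (𝓝 0) := by
    have h1 : Tendsto (fun t : ℝ => lam * t) atTop atTop :=
      Tendsto.const_mul_atTop hlam tendsto_id
    exact Real.tendsto_exp_neg_atTop_nhds_zero.comp h1
  have hVtend : Tendsto V atTop (𝓝 0) := by
    apply squeeze_zero' (Eventually.of_forall hVnonneg)
    · filter_upwards [eventually_ge_atTop (0:ℝ)] with t ht
      have := hVdecay 0 t ht
      simpa using this
    · simpa using hexp0.mul_const (V 0)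
  -- bound on the velocity
  have hv2 : ∀ t, ‖v t‖^2 ≤ 2 * V t := by
    intro t
    have h1 := mul_nonneg ha.le (hnn t)
    have h3 : 0 ≤ (e/2)*‖g t‖^2 := by positivity
    linarith [hVlow t]
  have hvb : ∀ s t, s ≤ t → ‖v t‖ ≤ Real.sqrt (2 * V s) * Real.exp (-(lam/2)*(t-s)) := by
    intro s t hst
    have h1 : ‖v t‖^2 ≤ 2 * V t := hv2 t
    have h2 := hVdecay s t hst
    have h4 : ‖v t‖^2 ≤ (Real.sqrt (2 * V s) * Real.exp (-(lam/2)*(t-s)))^2 := by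
      rw [mul_pow, Real.sq_sqrt (by have := hVnonneg s; linarith)]
      have h5 : (Real.exp (-(lam/2)*(t-s)))^2 = Real.exp (-(lam*(t-s))) := by
        rw [← Real.exp_nat_mul]
        congr 1
        push_cast
        ring
      rw [h5]
      linarith [h1, h2]
    calc ‖v t‖ = Real.sqrt (‖v t‖^2) := (Real.sqrt_sq (norm_nonneg _)).symm
      _ ≤ Real.sqrt ((Real.sqrt (2 * V s) * Real.exp (-(lam/2)*(t-s)))^2) :=
          Real.sqrt_le_sqrt h4
      _ = Real.sqrt (2 * V s) * Real.exp (-(lam/2)*(t-s)) := Real.sqrt_sq (by positivity)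
  -- v tends to 0
  have hv0 : Tendsto v atTop (𝓝 0) := by
    apply squeeze_zero_norm' (a := fun t => Real.sqrt (2 * V 0) * Real.exp (-(lam/2)*t))
    · filter_upwards [eventually_ge_atTop (0:ℝ)] with t ht
      have := hvb 0 t ht
      simpa using this
    · have h1 : Tendsto (fun t : ℝ => (lam/2) * t) atTop atTop :=
        Tendsto.const_mul_atTop (by positivity) tendsto_id
      have h2 : Tendsto (fun t : ℝ => Real.exp (-((lam/2)*t))) atTop (𝓝 0) :=
        Real.tendsto_exp_neg_atTop_nhds_zero.comp h1
      have h3 := h2.const_mul (Real.sqrt (2 * V 0))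
      simpa [neg_mul] using h3
  refine ⟨hv0, ?_⟩
  -- the integral bound on x
  have hdv : Differentiable ℝ v := fun t => (hv t).differentiableAt
  have hvcont : Continuous v := hdv.continuous
  have hxint : ∀ s t : ℝ, s ≤ t → ‖x t - x s‖ ≤ Real.sqrt (2 * V s) / (lam/2) := by
    intro s t hst
    set K := Real.sqrt (2 * V s) with hK_def
    have hK : (0:ℝ) ≤ K := Real.sqrt_nonneg _
    have heq : x t - x s = ∫ τ in s..t, v τ :=
      (intervalIntegral.integral_eq_sub_of_hasDerivAt (fun τ _ => hx τ)
        (hvcont.intervalIntegrable s t)).symm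
    have hb1 : ‖∫ τ in s..t, v τ‖ ≤ ∫ τ in s..t, ‖v τ‖ :=
      intervalIntegral.norm_integral_le_integral_norm hst
    have hcK : Continuous (fun τ : ℝ => K * Real.exp (-(lam/2)*(τ-s))) :=
      continuous_const.mul (Real.continuous_exp.comp
        (continuous_const.mul (continuous_id.sub continuous_const)))
    have hb2 : (∫ τ in s..t, ‖v τ‖) ≤ ∫ τ in s..t, K * Real.exp (-(lam/2)*(τ-s)) :=
      intervalIntegral.integral_mono_on hst ((hvcont.norm).intervalIntegrable s t)
        (hcK.intervalIntegrable s t) (fun τ hτ => hvb s τ hτ.1)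
    have hF : ∀ τ : ℝ, HasDerivAt (fun u => -(K/(lam/2)) * Real.exp (-(lam/2)*(u-s)))
        (K * Real.exp (-(lam/2)*(τ-s))) τ := by
      intro τ
      have h1 : HasDerivAt (fun u : ℝ => -(lam/2)*(u-s)) (-(lam/2)) τ := by
        simpa using ((hasDerivAt_id τ).sub_const s).const_mul (-(lam/2))
      have h2 := ((Real.hasDerivAt_exp _).comp τ h1).const_mul (-(K/(lam/2)))
      refine h2.congr_deriv ?_
      have hl : lam ≠ 0 := hlam.ne'
      field_simp
    have hb3 : (∫ τ in s..t, K * Real.exp (-(lam/2)*(τ-s)))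
        = -(K/(lam/2)) * Real.exp (-(lam/2)*(t-s)) + K/(lam/2) := by
      rw [intervalIntegral.integral_eq_sub_of_hasDerivAt (fun τ _ => hF τ)
        (hcK.intervalIntegrable s t)]
      rw [show -(lam/2)*(s-s) = 0 by ring, Real.exp_zero]
      ring
    have hb4 : -(K/(lam/2)) * Real.exp (-(lam/2)*(t-s)) + K/(lam/2) ≤ K/(lam/2) := by
      have h1 : (0:ℝ) < Real.exp (-(lam/2)*(t-s)) := Real.exp_pos _
      have h2 : 0 ≤ K/(lam/2) := by positivity
      have h3 := mul_nonneg h2 h1.le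
      linarith
    rw [heq]
    calc ‖∫ τ in s..t, v τ‖ ≤ ∫ τ in s..t, ‖v τ‖ := hb1
      _ ≤ ∫ τ in s..t, K * Real.exp (-(lam/2)*(τ-s)) := hb2
      _ = -(K/(lam/2)) * Real.exp (-(lam/2)*(t-s)) + K/(lam/2) := hb3
      _ ≤ K/(lam/2) := hb4
  -- x is Cauchy
  have hcauchy : CauchySeq x := by
    apply cauchySeq_of_le_tendsto_0 (fun N => Real.sqrt (2 * V N) / (lam/2))
    · intro n m N hn hm
      have key : ∀ s t : ℝ, N ≤ s → s ≤ t →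
          dist (x s) (x t) ≤ Real.sqrt (2 * V N) / (lam/2) := by
        intro s t hNs hst
        have h1 : V s ≤ V N := by
          have h2 := hVdecay N s hNs
          have h3 : Real.exp (-(lam*(s-N))) ≤ 1 := by
            rw [Real.exp_le_one_iff]
            have h4 := mul_nonneg hlam.le (show (0:ℝ) ≤ s - N by linarith)
            linarith
          have h5 := mul_le_mul_of_nonneg_right h3 (hVnonneg N)
          linarith
        have h5 : Real.sqrt (2 * V s) ≤ Real.sqrt (2 * V N) :=
          Real.sqrt_le_sqrt (by linarith)
        rw [dist_eq_norm, norm_sub_rev]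
        calc ‖x t - x s‖ ≤ Real.sqrt (2 * V s) / (lam/2) := hxint s t hst
          _ ≤ Real.sqrt (2 * V N) / (lam/2) :=
              by gcongr
      rcases le_total n m with h | h
      · exact key n m hn h
      · rw [dist_comm]; exact key m n hm h
    · have h1 : Tendsto (fun N => 2 * V N) atTop (𝓝 0) := by
        simpa using hVtend.const_mul 2
      have h2 : Tendsto (fun N => Real.sqrt (2 * V N)) atTop (𝓝 0) := by
        have h3 := (Real.continuous_sqrt.tendsto 0).comp h1
        simpa only [Function.comp_def, Real.sqrt_zero] using h3
      simpa using h2.div_const (lam/2)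
  obtain ⟨xinf, hxinf⟩ := cauchySeq_tendsto_of_complete hcauchy
  refine ⟨xinf, ?_, hxinf⟩
  -- the limit is a minimizer
  have hfx0 : Tendsto (fun t => f (x t)) atTop (𝓝 (f xinf)) :=
    (hC2.continuous.tendsto xinf).comp hxinf
  have hfx1 : Tendsto (fun t => f (x t) - f xstar) atTop (𝓝 0) := by
    apply squeeze_zero' (g := fun t => V t / a) (Eventually.of_forall hnn)
    · apply Eventually.of_forall
      intro t
      have h3 : 0 ≤ (1/2)*‖v t‖^2 := by positivity
      have h4 : 0 ≤ (e/2)*‖g t‖^2 := by positivity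
      have h2 : a*(f (x t) - f xstar) ≤ V t := by linarith [hVlow t]
      show f (x t) - f xstar ≤ V t / a
      rw [le_div_iff₀ ha]
      linarith
    · simpa using hVtend.div_const a
  have hfx2 : Tendsto (fun t => f (x t)) atTop (𝓝 (f xstar)) := by
    have h1 := hfx1.add_const (f xstar)
    simpa using h1
  have hfeqq : f xinf = f xstar := tendsto_nhds_unique hfx0 hfx2
  intro y
  rw [hfeqq]
  exact hstar y
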